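/- Let X be a C*-correspondence over A. X admits a Hilbert A-bimodule structure if and only if K(X) ⊆ φ_X(A) and φ_X^{-1}(K(X)) decomposes as the direct sum of ideals ker φ_X ⊕ J_X, where J_X = (ker φ_X)^⊥ ∩ φ_X^{-1}(K(X)); equivalently, if and only if the restriction of φ_X to J_X is a *-isomorphism onto K(X). -/

import Mathlib

open scoped RightActions NNReal
open UniformSpace (Completion)
open UniformSpace.Completion (toComplL)
open MulOpposite (op unop)

/-- The December 2024 Mathlib `CStarModule` (right `A`-module via `SMul Aᵐᵒᵖ E`), whose name
Mathlib now uses for a class with another convention. -/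
class CStarModuleOld (A E : Type*) [NonUnitalSemiring A] [StarRing A] [Module ℂ A]
    [AddCommGroup E] [Module ℂ E] [PartialOrder A] [SMul Aᵐᵒᵖ E] [Norm A] [Norm E]
    extends Inner A E where
  inner_add_right {x} {y} {z} : inner x (y + z) = inner x y + inner x z
  inner_self_nonneg {x} : 0 ≤ inner x x
  inner_self {x} : inner x x = 0 ↔ x = 0
  inner_op_smul_right {a : A} {x y : E} : inner x (y <• a) = inner x y * a
  inner_smul_right_complex {z : ℂ} {x} {y} : inner x (z • y) = z • inner x y
  star_inner x y : star (inner x y) = inner y x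
  norm_eq_sqrt_norm_inner_self x : ‖x‖ = √‖inner x x‖


namespace CStarModuleOld

variable {A E : Type*}
    [NonUnitalCStarAlgebra A] [PartialOrder A] [StarOrderedRing A]
    [NormedAddCommGroup E] [NormedSpace ℂ E] [SMul Aᵐᵒᵖ E] [CStarModuleOld A E]

set_option linter.unusedSectionVars false

local notation "⟪" x ", " y "⟫" => inner A x y

@[simp] lemma inner_add_left {x y z : E} : ⟪x + y, z⟫ = ⟪x, z⟫ + ⟪y, z⟫ := by
  rw [← star_star (r := ⟪x + y, z⟫)]
  simp only [inner_add_right, star_add, star_inner]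

@[simp] lemma inner_op_smul_left {a : A} {x y : E} : ⟪x <• a, y⟫ = star a * ⟪x, y⟫ := by
  rw [← star_inner y (x <• a), inner_op_smul_right, star_mul, star_inner]

@[simp] lemma inner_smul_left_complex {z : ℂ} {x y : E} : ⟪z • x, y⟫ = star z • ⟪x, y⟫ := by
  rw [← star_inner y (z • x), inner_smul_right_complex, star_smul, star_inner]

lemma inner_smul_left_real {z : ℝ} {x y : E} : ⟪z • x, y⟫ = z • ⟪x, y⟫ := by
  have h₁ : z • x = (z : ℂ) • x := by simp
  rw [h₁, inner_smul_left_complex]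
  simp

lemma inner_smul_right_real {z : ℝ} {x y : E} : ⟪x, z • y⟫ = z • ⟪x, y⟫ := by
  have h₁ : z • y = (z : ℂ) • y := by simp
  rw [h₁, inner_smul_right_complex]
  simp

@[simp] lemma inner_zero_right {x : E} : ⟪x, 0⟫ = 0 := by
  have := inner_smul_right_complex (A := A) (z := 0) (x := x) (y := 0)
  simpa using this

@[simp] lemma inner_neg_right {x y : E} : ⟪x, -y⟫ = -⟪x, y⟫ := by
  rw [← neg_one_smul ℂ y, inner_smul_right_complex, neg_one_smul]

@[simp] lemma inner_sub_right {x y z : E} : ⟪x, y - z⟫ = ⟪x, y⟫ - ⟪x, z⟫ := by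
  rw [sub_eq_add_neg, inner_add_right, inner_neg_right, ← sub_eq_add_neg]

@[simp] lemma inner_zero_left {x : E} : ⟪0, x⟫ = 0 := by
  rw [← star_inner x 0, inner_zero_right, star_zero]

@[simp] lemma inner_neg_left {x y : E} : ⟪-x, y⟫ = -⟪x, y⟫ := by
  rw [← star_inner y (-x), inner_neg_right, star_neg, star_inner]

@[simp] lemma inner_sub_left {x y z : E} : ⟪x - y, z⟫ = ⟪x, z⟫ - ⟪y, z⟫ := by
  rw [← star_inner z (x - y), inner_sub_right, star_sub, star_inner, star_inner]

lemma norm_sq_eq {x : E} : ‖x‖ ^ 2 = ‖⟪x, x⟫‖ := by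
  rw [norm_eq_sqrt_norm_inner_self (A := A) x, Real.sq_sqrt (norm_nonneg _)]

lemma inner_mul_inner_swap_le {x y : E} : ⟪y, x⟫ * ⟪x, y⟫ ≤ ‖x‖ ^ 2 • ⟪y, y⟫ := by
  rcases eq_or_ne x 0 with h | h
  · simp [h, inner_zero_left, inner_zero_right]
  · have h₁ : ∀ (a : A),
        (0 : A) ≤ ‖x‖ ^ 2 • (star a * a) - ‖x‖ ^ 2 • (star a * ⟪x, y⟫)
                  - ‖x‖ ^ 2 • (⟪y, x⟫ * a) + ‖x‖ ^ 2 • (‖x‖ ^ 2 • ⟪y, y⟫) := fun a => by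
      calc (0 : A) ≤ ⟪x <• a - ‖x‖ ^ 2 • y, x <• a - ‖x‖ ^ 2 • y⟫ := by
                      exact inner_self_nonneg
            _ = star a * ⟪x, x⟫ * a - ‖x‖ ^ 2 • (star a * ⟪x, y⟫)
                  - ‖x‖ ^ 2 • (⟪y, x⟫ * a) + ‖x‖ ^ 2 • (‖x‖ ^ 2 • ⟪y, y⟫) := by
                      simp only [inner_sub_right, inner_op_smul_right, inner_sub_left,
                        inner_op_smul_left, inner_smul_left_real, mul_sub, mul_smul_comm,
                        inner_smul_right_real, smul_sub, mul_assoc, smul_mul_assoc, sub_mul, add_mul]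
                      abel
            _ ≤ ‖x‖ ^ 2 • (star a * a) - ‖x‖ ^ 2 • (star a * ⟪x, y⟫)
                  - ‖x‖ ^ 2 • (⟪y, x⟫ * a) + ‖x‖ ^ 2 • (‖x‖ ^ 2 • ⟪y, y⟫) := by
                      gcongr
                      calc _ ≤ ‖⟪x, x⟫‖ • (star a * a) :=
                          CStarAlgebra.star_left_conjugate_le_norm_smul (hb := star_inner x x)
                        _ = ‖x‖ ^ 2 • (star a * a) := by rw [norm_sq_eq (A := A)]
    specialize h₁ ⟪x, y⟫
    simp only [star_inner, sub_self, zero_sub, le_neg_add_iff_add_le, add_zero] at h₁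
    rwa [smul_le_smul_iff_of_pos_left (pow_pos (norm_pos_iff.mpr h) _)] at h₁

variable (E) in
lemma norm_inner_le {x y : E} : ‖⟪x, y⟫‖ ≤ ‖x‖ * ‖y‖ := by
  have := calc ‖⟪x, y⟫‖ ^ 2 = ‖⟪y, x⟫ * ⟪x, y⟫‖ := by
                rw [← star_inner x, CStarRing.norm_star_mul_self, pow_two]
    _ ≤ ‖‖x‖ ^ 2 • ⟪y, y⟫‖ := by
                refine CStarAlgebra.norm_le_norm_of_nonneg_of_le ?_ inner_mul_inner_swap_le
                rw [← star_inner x]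
                exact star_mul_self_nonneg ⟪x, y⟫
    _ = ‖x‖ ^ 2 * ‖⟪y, y⟫‖ := by simp [norm_smul]
    _ = ‖x‖ ^ 2 * ‖y‖ ^ 2 := by rw [norm_sq_eq (A := A) (x := y)]
    _ = (‖x‖ * ‖y‖) ^ 2 := by simp only [mul_pow]
  refine (pow_le_pow_iff_left₀ (norm_nonneg ⟪x, y⟫) ?_ (by simp)).mp this
  exact mul_nonneg (norm_nonneg _) (norm_nonneg _)

end CStarModuleOld

attribute [simp] CStarModuleOld.inner_add_right CStarModuleOld.star_inner
attribute [simp] CStarModuleOld.inner_op_smul_right CStarModuleOld.inner_smul_right_complex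

noncomputable section CorrAux

namespace CorrAux

variable {A E : Type*}
    [NonUnitalCStarAlgebra A] [PartialOrder A] [StarOrderedRing A]
    [NormedAddCommGroup E] [NormedSpace ℂ E] [SMul Aᵐᵒᵖ E] [CStarModuleOld A E]

set_option linter.unusedSectionVars false

lemma inner_ext {v w : E} (h : ∀ x : E, (inner A x v : A) = inner A x w) : v = w := by
  have h2 : (inner A (v - w) (v - w) : A) = 0 := by
    rw [CStarModuleOld.inner_sub_right, h (v - w), sub_self]
  simpa [sub_eq_zero] using CStarModuleOld.inner_self.mp h2

lemma eq_zero_of_inner (v : E) (h : ∀ x : E, (inner A x v : A) = 0) : v = 0 :=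
  inner_ext (A := A) (fun x => by simpa using h x)

lemma add_opsmul (ξ η : E) (a : A) : (ξ + η) <• a = ξ <• a + η <• a := by
  refine inner_ext (A := A) fun x => ?_
  rw [CStarModuleOld.inner_op_smul_right, CStarModuleOld.inner_add_right,
    CStarModuleOld.inner_add_right, CStarModuleOld.inner_op_smul_right,
    CStarModuleOld.inner_op_smul_right, add_mul]

lemma opsmul_add (ξ : E) (a b : A) : ξ <• (a + b) = ξ <• a + ξ <• b := by
  refine inner_ext (A := A) fun x => ?_
  rw [CStarModuleOld.inner_op_smul_right, CStarModuleOld.inner_add_right,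
    CStarModuleOld.inner_op_smul_right, CStarModuleOld.inner_op_smul_right, mul_add]

lemma opsmul_csmul (ξ : E) (z : ℂ) (a : A) : ξ <• (z • a) = z • (ξ <• a) := by
  refine inner_ext (A := A) fun x => ?_
  rw [CStarModuleOld.inner_op_smul_right, CStarModuleOld.inner_smul_right_complex,
    CStarModuleOld.inner_op_smul_right, mul_smul_comm]

lemma opsmul_zero (ξ : E) : ξ <• (0 : A) = 0 := by
  refine inner_ext (A := A) fun x => ?_
  rw [CStarModuleOld.inner_op_smul_right, mul_zero, CStarModuleOld.inner_zero_right]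

lemma zero_opsmul (a : A) : (0 : E) <• a = 0 := by
  refine inner_ext (A := A) fun x => ?_
  rw [CStarModuleOld.inner_op_smul_right, CStarModuleOld.inner_zero_right, zero_mul]

lemma opsmul_mul (ξ : E) (a b : A) : ξ <• (a * b) = (ξ <• a) <• b := by
  refine inner_ext (A := A) fun x => ?_
  rw [CStarModuleOld.inner_op_smul_right, CStarModuleOld.inner_op_smul_right,
    CStarModuleOld.inner_op_smul_right, mul_assoc]

lemma norm_opsmul_le (ξ : E) (a : A) : ‖ξ <• a‖ ≤ ‖ξ‖ * ‖a‖ := by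
  have h1 : ‖ξ <• a‖ ^ 2 = ‖star a * (inner A ξ ξ : A) * a‖ := by
    rw [CStarModuleOld.norm_sq_eq (A := A)]
    congr 1
    rw [CStarModuleOld.inner_op_smul_right, CStarModuleOld.inner_op_smul_left, mul_assoc]
  have h3 : ‖ξ <• a‖ ^ 2 ≤ (‖ξ‖ * ‖a‖) ^ 2 := by
    rw [h1]
    calc ‖star a * (inner A ξ ξ : A) * a‖ ≤ ‖star a * (inner A ξ ξ : A)‖ * ‖a‖ := norm_mul_le _ _
    _ ≤ ‖star a‖ * ‖(inner A ξ ξ : A)‖ * ‖a‖ := by gcongr; exact norm_mul_le _ _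
    _ ≤ ‖a‖ * (‖ξ‖ * ‖ξ‖) * ‖a‖ := by
        rw [norm_star]
        gcongr
        simpa [sq] using (CStarModuleOld.norm_sq_eq (A := A) (x := ξ)).symm.le
    _ = (‖ξ‖ * ‖a‖) ^ 2 := by ring
  have h4 := Real.sqrt_le_sqrt h3
  rwa [Real.sqrt_sq (norm_nonneg _), Real.sqrt_sq (by positivity)] at h4

/-- The rank one operator `ζ ↦ ξ <• ⟪η, ζ⟫`. -/
def rankOne (ξ η : E) : E →L[ℂ] E :=
  LinearMap.mkContinuous
    { toFun := fun ζ => ξ <• (inner A η ζ : A)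
      map_add' := fun ζ ζ' => by
        show ξ <• (inner A η (ζ + ζ') : A) = ξ <• (inner A η ζ : A) + ξ <• (inner A η ζ' : A)
        rw [CStarModuleOld.inner_add_right, opsmul_add]
      map_smul' := fun z ζ => by
        show ξ <• (inner A η (z • ζ) : A) = z • (ξ <• (inner A η ζ : A))
        rw [CStarModuleOld.inner_smul_right_complex, opsmul_csmul] }
    (‖ξ‖ * ‖η‖)
    (fun ζ => by
      show ‖ξ <• (inner A η ζ : A)‖ ≤ ‖ξ‖ * ‖η‖ * ‖ζ‖
      calc ‖ξ <• (inner A η ζ : A)‖ ≤ ‖ξ‖ * ‖(inner A η ζ : A)‖ := norm_opsmul_le _ _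
      _ ≤ ‖ξ‖ * (‖η‖ * ‖ζ‖) := by gcongr; exact CStarModuleOld.norm_inner_le E
      _ = ‖ξ‖ * ‖η‖ * ‖ζ‖ := by ring)

@[simp] lemma rankOne_apply (ξ η ζ : E) : rankOne (A := A) ξ η ζ = ξ <• (inner A η ζ : A) := rfl



/-- the extension of an operator on `E` to the completion of `E`. -/
def extO (T : E →L[ℂ] E) : Completion E →L[ℂ] Completion E :=
  ContinuousLinearMap.extend ((toComplL (𝕜 := ℂ)).comp T) toComplL

lemma extO_coe (T : E →L[ℂ] E) (ξ : E) : extO T (ξ : Completion E) = (T ξ : Completion E) :=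
  ContinuousLinearMap.extend_eq ((toComplL (𝕜 := ℂ)).comp T) (e := toComplL) (h_dense := UniformSpace.Completion.denseRange_coe)
    (h_e := UniformSpace.Completion.isUniformInducing_coe E) (x := ξ)

lemma opExt {g h : Completion E →L[ℂ] Completion E}
    (H : ∀ ξ : E, g (ξ : Completion E) = h (ξ : Completion E)) : g = h := by
  ext x
  exact UniformSpace.Completion.induction_on x
    (isClosed_eq g.continuous h.continuous) H

lemma extO_add (T S : E →L[ℂ] E) : extO (T + S) = extO T + extO S := by
  refine opExt fun ξ => ?_
  simp [extO_coe, UniformSpace.Completion.coe_add]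

lemma extO_mul (T S : E →L[ℂ] E) : extO (T * S) = extO T * extO S := by
  refine opExt fun ξ => ?_
  simp only [ContinuousLinearMap.mul_apply, extO_coe]

lemma extO_smul (z : ℂ) (T : E →L[ℂ] E) : extO (z • T) = z • extO T := by
  refine opExt fun ξ => ?_
  simp [extO_coe, UniformSpace.Completion.coe_smul]

lemma extO_one : extO (1 : E →L[ℂ] E) = 1 := by
  refine opExt fun ξ => ?_
  simp [extO_coe]

lemma extO_inj {T S : E →L[ℂ] E} (h : extO T = extO S) : T = S := by
  ext ξ
  have h2 : extO T (ξ : Completion E) = extO S (ξ : Completion E) := by rw [h]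
  rw [extO_coe, extO_coe] at h2
  exact (UniformSpace.Completion.coe_isometry.injective h2 :)

lemma norm_extO (T : E →L[ℂ] E) : ‖extO T‖ = ‖T‖ := by
  refine le_antisymm ?_ ?_
  · have h1 : ∀ x : E, ‖x‖ ≤ (1 : ℝ≥0) * ‖toComplL (𝕜 := ℂ) x‖ := fun x => by
      simp [UniformSpace.Completion.norm_coe]
    have h2 := ContinuousLinearMap.opNorm_extend_le (f := (toComplL (𝕜 := ℂ)).comp T)
      (e := toComplL) UniformSpace.Completion.denseRange_coe h1
    refine le_trans (le_trans (le_of_eq rfl) h2) ?_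
    rw [NNReal.coe_one, one_mul]
    refine ContinuousLinearMap.opNorm_le_bound _ (norm_nonneg T) fun x => ?_
    simp only [ContinuousLinearMap.comp_apply, UniformSpace.Completion.coe_toComplL]
    rw [UniformSpace.Completion.norm_coe]
    exact T.le_opNorm x
  · refine ContinuousLinearMap.opNorm_le_bound _ (norm_nonneg _) fun ξ => ?_
    have := (extO T).le_opNorm (ξ : Completion E)
    rwa [extO_coe, UniformSpace.Completion.norm_coe, UniformSpace.Completion.norm_coe] at this

/-- adjoint pairs of operators -/
def IsAdj (A : Type*) {E : Type*}
    [NonUnitalCStarAlgebra A] [PartialOrder A] [StarOrderedRing A]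
    [NormedAddCommGroup E] [NormedSpace ℂ E] [SMul Aᵐᵒᵖ E] [CStarModuleOld A E]
    (T S : E →L[ℂ] E) : Prop :=
  ∀ ξ η : E, (inner A (T ξ) η : A) = inner A ξ (S η)

lemma IsAdj.symm {T S : E →L[ℂ] E} (h : IsAdj A T S) : IsAdj A S T := by
  intro ξ η
  have := congrArg star (h η ξ)
  rw [CStarModuleOld.star_inner, CStarModuleOld.star_inner] at this
  exact this.symm
  
lemma IsAdj.norm_le {T S : E →L[ℂ] E} (h : IsAdj A T S) : ‖T‖ ≤ ‖S‖ := by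
  refine ContinuousLinearMap.opNorm_le_bound _ (norm_nonneg S) fun ξ => ?_
  rcases le_or_gt ‖T ξ‖ 0 with hz | hz
  · exact le_trans hz (by positivity)
  · have h1 : ‖T ξ‖ ^ 2 = ‖(inner A ξ (S (T ξ)) : A)‖ := by
      rw [CStarModuleOld.norm_sq_eq (A := A), h ξ (T ξ)]
    have h2 : ‖(inner A ξ (S (T ξ)) : A)‖ ≤ ‖ξ‖ * (‖S‖ * ‖T ξ‖) := by
      refine le_trans (CStarModuleOld.norm_inner_le E) ?_
      gcongr
      exact S.le_opNorm _
    have h3 : ‖T ξ‖ * ‖T ξ‖ ≤ (‖S‖ * ‖ξ‖) * ‖T ξ‖ := by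
      rw [← sq]; rw [h1] at *; nlinarith
    exact le_of_mul_le_mul_right h3 hz

lemma IsAdj.norm_eq {T S : E →L[ℂ] E} (h : IsAdj A T S) : ‖T‖ = ‖S‖ :=
  le_antisymm h.norm_le h.symm.norm_le

lemma IsAdj.norm_sq_le {T S : E →L[ℂ] E} (h : IsAdj A T S) : ‖T‖ * ‖T‖ ≤ ‖S * T‖ := by
  have key : ‖T‖ ≤ Real.sqrt ‖S * T‖ := by
    refine ContinuousLinearMap.opNorm_le_bound _ (Real.sqrt_nonneg _) fun ξ => ?_
    have h1 : ‖T ξ‖ ^ 2 = ‖(inner A ξ ((S * T) ξ) : A)‖ := by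
      rw [CStarModuleOld.norm_sq_eq (A := A), h ξ (T ξ)]; rfl
    have h2 : ‖T ξ‖ ^ 2 ≤ ‖S * T‖ * ‖ξ‖ ^ 2 := by
      rw [h1]
      calc ‖(inner A ξ ((S * T) ξ) : A)‖ ≤ ‖ξ‖ * ‖(S * T) ξ‖ := CStarModuleOld.norm_inner_le E
      _ ≤ ‖ξ‖ * (‖S * T‖ * ‖ξ‖) := by gcongr; exact (S * T).le_opNorm ξ
      _ = ‖S * T‖ * ‖ξ‖ ^ 2 := by ring
    have h3 := Real.sqrt_le_sqrt h2
    rw [Real.sqrt_sq (norm_nonneg _)] at h3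
    refine le_trans h3 ?_
    rw [Real.sqrt_mul (norm_nonneg _), Real.sqrt_sq (norm_nonneg _)]
  calc ‖T‖ * ‖T‖ ≤ Real.sqrt ‖S * T‖ * Real.sqrt ‖S * T‖ := by
        have := norm_nonneg T; nlinarith
  _ = ‖S * T‖ := Real.mul_self_sqrt (norm_nonneg _)


section AdjAlgebra

/-- ambient product algebra -/
abbrev DD (E : Type*) [NormedAddCommGroup E] [NormedSpace ℂ E] : Type _ :=
  (Completion E →L[ℂ] Completion E) × (Completion E →L[ℂ] Completion E)ᵐᵒᵖ

variable (A E)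

/-- The pairs `(extO T, op (extO S))` for adjoint pairs `(T, S)` form a subring of
`(Completion E →L[ℂ] Completion E) × (Completion E →L[ℂ] Completion E)ᵐᵒᵖ`. -/
def adjPairs : Subring (DD E) where
  carrier := {p | ∃ T S : E →L[ℂ] E, IsAdj A T S ∧ p = (extO T, op (extO S))}
  one_mem' := ⟨1, 1, fun ξ η => rfl, by rw [extO_one]; rfl⟩
  zero_mem' := ⟨0, 0, fun ξ η => by simp, by
    have : extO (0 : E →L[ℂ] E) = 0 := by
      have := extO_add (0 : E →L[ℂ] E) 0
      simpa using this.symm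
    rw [this]; rfl⟩
  add_mem' := by
    rintro p q ⟨T, S, h, rfl⟩ ⟨T', S', h', rfl⟩
    exact ⟨T + T', S + S', fun ξ η => by
        simp only [ContinuousLinearMap.add_apply, CStarModuleOld.inner_add_left,
          CStarModuleOld.inner_add_right, h ξ η, h' ξ η],
      by rw [extO_add, extO_add]; rfl⟩
  neg_mem' := by
    rintro p ⟨T, S, h, rfl⟩
    refine ⟨-T, -S, fun ξ η => ?_, ?_⟩
    · simp only [ContinuousLinearMap.neg_apply, CStarModuleOld.inner_neg_left,
        CStarModuleOld.inner_neg_right, h ξ η]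
    · have hn : ∀ (W : E →L[ℂ] E), extO (-W) = -extO W := fun W => by
        have := extO_smul (-1 : ℂ) W
        simpa [neg_one_smul] using this
      rw [hn, hn]; rfl
  mul_mem' := by
    rintro p q ⟨T, S, h, rfl⟩ ⟨T', S', h', rfl⟩
    refine ⟨T * T', S' * S, fun ξ η => ?_, ?_⟩
    · show (inner A (T (T' ξ)) η : A) = inner A ξ (S' (S η))
      rw [h (T' ξ) η, h' ξ (S η)]
    · rw [extO_mul, extO_mul]
      exact Prod.ext rfl (by simp [MulOpposite.op_mul])

/-- The closure: a unital C⋆-algebra of "adjointable" operators. -/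
def adjC : Subring (DD E) :=
  (adjPairs A E).topologicalClosure

variable {A E}

lemma mem_adjC_of_pair {T S : E →L[ℂ] E} (h : IsAdj A T S) :
    (extO T, op (extO S)) ∈ adjC A E :=
  (adjPairs A E).le_topologicalClosure ⟨T, S, h, rfl⟩

/-- the swap map implementing the adjoint -/
def σswap : DD E → DD E :=
  fun p => (p.2.unop, op p.1)

lemma continuous_σswap : Continuous (σswap (E := E)) :=
  (MulOpposite.continuous_unop.comp continuous_snd).prodMk
    (MulOpposite.continuous_op.comp continuous_fst)

lemma σswap_mem {p} (hp : p ∈ adjC A E) : σswap p ∈ adjC A E := by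
  have himg : σswap (E := E) '' (adjPairs A E : Set (DD E)) ⊆ (adjPairs A E : Set (DD E)) := by
    rintro q ⟨p, ⟨T, S, h, rfl⟩, rfl⟩
    exact ⟨S, T, h.symm, rfl⟩
  have h1 : σswap p ∈ σswap (E := E) '' closure (adjPairs A E : Set (DD E)) := ⟨p, hp, rfl⟩
  have h2 := (image_closure_subset_closure_image (continuous_σswap)) h1
  exact closure_mono himg h2

instance : Star ↥(adjC A E) where
  star x := ⟨σswap x.val, σswap_mem x.property⟩

lemma adjC_star_val (x : ↥(adjC A E)) : (star x).val = σswap x.val := rfl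

instance : StarRing ↥(adjC A E) where
  star_involutive x := Subtype.ext rfl
  star_mul x y := Subtype.ext <| by
    show σswap (x.val * y.val) = σswap y.val * σswap x.val
    refine Prod.ext ?_ ?_
    · show (x.val.2 * y.val.2).unop = y.val.2.unop * x.val.2.unop
      rfl
    · show op (x.val.1 * y.val.1) = op y.val.1 * op x.val.1
      rfl
  star_add x y := Subtype.ext <| by
    show σswap (x.val + y.val) = σswap x.val + σswap y.val
    refine Prod.ext rfl rfl

instance : CompleteSpace ↥(adjC A E) := by
  have h : IsClosed ((adjC A E : Set (DD E))) := (adjPairs A E).isClosed_topologicalClosure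
  exact h.completeSpace_coe

lemma adjC_norm_val (x : ↥(adjC A E)) : ‖x‖ = ‖x.val‖ := rfl

lemma adjC_norm_pair {T S : E →L[ℂ] E} (h : IsAdj A T S) :
    ‖((extO T, op (extO S)) : DD E)‖ = ‖T‖ := by
  rw [Prod.norm_def]
  show max ‖extO T‖ ‖op (extO S)‖ = ‖T‖
  rw [MulOpposite.norm_op, norm_extO, norm_extO, ← h.norm_eq, max_self]

instance : CStarRing ↥(adjC A E) where
  norm_mul_self_le x := by
    have key : ∀ p ∈ closure (adjPairs A E : Set (DD E)), ‖p‖ * ‖p‖ ≤ ‖σswap p * p‖ := by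
      intro p hp
      refine closure_minimal (t := {p : DD E | ‖p‖ * ‖p‖ ≤ ‖σswap p * p‖}) ?_ ?_ hp
      · rintro q ⟨T, S, h, rfl⟩
        show ‖(_ : DD E)‖ * ‖_‖ ≤ _
        have h1 : σswap (extO T, op (extO S)) * (extO T, op (extO S)) =
            (extO (S * T), op (extO (S * T))) := by
          refine Prod.ext ?_ ?_
          · show extO S * extO T = extO (S * T)
            rw [extO_mul]
          · show op (extO T) * op (extO S) = op (extO (S * T))
            rw [extO_mul]; rfl
        rw [h1, adjC_norm_pair h]
        have h2 : ‖((extO (S * T), op (extO (S * T))) : DD E)‖ = ‖S * T‖ := by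
          rw [Prod.norm_def]
          show max ‖extO (S * T)‖ ‖op (extO (S * T))‖ = ‖S * T‖
          rw [MulOpposite.norm_op, norm_extO, max_self]
        rw [h2]
        exact h.norm_sq_le
      · have hcont : Continuous fun p :
            (Completion E →L[ℂ] Completion E) × (Completion E →L[ℂ] Completion E)ᵐᵒᵖ =>
            σswap p * p := (continuous_σswap.mul continuous_id)
        exact isClosed_le (by fun_prop) (hcont.norm)
    exact key x.val x.property

end AdjAlgebra

section CModule

set_option maxHeartbeats 1000000
set_option synthInstance.maxHeartbeats 400000

/-- the twisted scalar action on pairs -/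
def τsm (z : ℂ) : DD E → DD E := fun p => (z • p.1, op (starRingEnd ℂ z • p.2.unop))

lemma continuous_τsm (z : ℂ) : Continuous (τsm (E := E) z) :=
  ((continuous_fst.const_smul z)).prodMk
    (MulOpposite.continuous_op.comp (show Continuous fun p : DD E => starRingEnd ℂ z • p.2.unop from
      (MulOpposite.continuous_unop.comp continuous_snd :
        Continuous fun p : DD E => p.2.unop).const_smul (starRingEnd ℂ z)))

lemma τsm_mem (z : ℂ) {p : DD E} (hp : p ∈ adjC A E) : τsm z p ∈ adjC A E := by
  have himg : τsm (E := E) z '' (adjPairs A E : Set (DD E)) ⊆ (adjPairs A E : Set (DD E)) := by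
    rintro q ⟨p, ⟨T, S, h, rfl⟩, rfl⟩
    refine ⟨z • T, starRingEnd ℂ z • S, fun ξ η => ?_, ?_⟩
    · show (inner A (z • T ξ) η : A) = inner A ξ (starRingEnd ℂ z • S η)
      rw [CStarModuleOld.inner_smul_left_complex, CStarModuleOld.inner_smul_right_complex, h ξ η]
      rfl
    · rw [extO_smul, extO_smul]; rfl
  have h1 : τsm z p ∈ τsm (E := E) z '' closure (adjPairs A E : Set (DD E)) := ⟨p, hp, rfl⟩
  have h2 := (image_closure_subset_closure_image (continuous_τsm z)) h1
  exact closure_mono himg h2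

instance : SMul ℂ ↥(adjC A E) where
  smul z x := ⟨τsm z x.val, τsm_mem z x.property⟩

lemma adjC_smul_fst (z : ℂ) (x : ↥(adjC A E)) : ((z • x).val).1 = z • x.val.1 := rfl
lemma adjC_smul_snd (z : ℂ) (x : ↥(adjC A E)) :
    unop ((z • x).val).2 = starRingEnd ℂ z • unop x.val.2 := rfl

lemma DD_ext {p q : DD E} (h1 : p.1 = q.1) (h2 : p.2.unop = q.2.unop) : p = q :=
  Prod.ext h1 (MulOpposite.unop_injective h2)

lemma adjC_ext {x y : ↥(adjC A E)} (h1 : x.val.1 = y.val.1)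
    (h2 : unop x.val.2 = unop y.val.2) : x = y :=
  Subtype.ext (DD_ext h1 h2)

instance : Module ℂ ↥(adjC A E) where
  one_smul x := adjC_ext (by rw [adjC_smul_fst, one_smul])
    (by rw [adjC_smul_snd, map_one, one_smul])
  mul_smul z w x := adjC_ext
    (by rw [adjC_smul_fst, adjC_smul_fst, adjC_smul_fst, mul_smul])
    (by rw [adjC_smul_snd, adjC_smul_snd, adjC_smul_snd, map_mul, mul_smul])
  smul_zero z := adjC_ext (by rw [adjC_smul_fst]; show z • (0 : DD E).1 = (0 : DD E).1; simp)
    (by rw [adjC_smul_snd]; show starRingEnd ℂ z • unop (0 : DD E).2 = unop (0 : DD E).2; simp)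
  smul_add z x y := adjC_ext
    (by rw [adjC_smul_fst]
        show z • (x.val.1 + y.val.1) = (z • x).val.1 + (z • y).val.1
        rw [adjC_smul_fst, adjC_smul_fst, smul_add])
    (by rw [adjC_smul_snd]
        show starRingEnd ℂ z • (unop x.val.2 + unop y.val.2)
          = unop ((z • x).val).2 + unop ((z • y).val).2
        rw [adjC_smul_snd, adjC_smul_snd, smul_add])
  add_smul z w x := adjC_ext
    (by rw [adjC_smul_fst]
        show (z + w) • x.val.1 = (z • x).val.1 + (w • x).val.1
        rw [adjC_smul_fst, adjC_smul_fst, add_smul])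
    (by rw [adjC_smul_snd]
        show starRingEnd ℂ (z + w) • unop x.val.2 = unop ((z • x).val).2 + unop ((w • x).val).2
        rw [adjC_smul_snd, adjC_smul_snd, map_add, add_smul])
  zero_smul x := adjC_ext (by rw [adjC_smul_fst]; show (0 : ℂ) • x.val.1 = (0 : DD E).1; simp)
    (by rw [adjC_smul_snd]; show starRingEnd ℂ 0 • unop x.val.2 = unop (0 : DD E).2; simp)

lemma adjC_mul_fst (x y : ↥(adjC A E)) : ((x * y).val).1 = x.val.1 * y.val.1 := rfl
lemma adjC_mul_snd (x y : ↥(adjC A E)) :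
    unop ((x * y).val).2 = unop y.val.2 * unop x.val.2 := rfl

instance : IsScalarTower ℂ ↥(adjC A E) ↥(adjC A E) where
  smul_assoc z x y := by
    show (z • x) * y = z • (x * y)
    refine adjC_ext ?_ ?_
    · rw [adjC_mul_fst, adjC_smul_fst, adjC_smul_fst, adjC_mul_fst]
      exact ContinuousLinearMap.ext fun ζ => rfl
    · rw [adjC_mul_snd, adjC_smul_snd, adjC_smul_snd, adjC_mul_snd]
      ext ζ
      simp [ContinuousLinearMap.mul_apply, map_smul]

instance : SMulCommClass ℂ ↥(adjC A E) ↥(adjC A E) where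
  smul_comm z x y := by
    show z • (x * y) = x * (z • y)
    refine adjC_ext ?_ ?_
    · rw [adjC_mul_fst, adjC_smul_fst, adjC_mul_fst, adjC_smul_fst]
      ext ζ
      simp [ContinuousLinearMap.mul_apply, map_smul]
    · rw [adjC_mul_snd, adjC_smul_snd, adjC_smul_snd, adjC_mul_snd]
      exact ContinuousLinearMap.ext fun ζ => rfl

instance : Algebra ℂ ↥(adjC A E) :=
  Algebra.ofModule (fun z x y => smul_assoc z x y) (fun z x y => (smul_comm z x y).symm)

instance : NormedAlgebra ℂ ↥(adjC A E) where
  norm_smul_le z x := by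
    show max ‖((z • x).val).1‖ ‖((z • x).val).2‖ ≤ ‖z‖ * max ‖x.val.1‖ ‖x.val.2‖
    have h2 : ‖((z • x).val).2‖ ≤ ‖z‖ * ‖x.val.2‖ := by
      calc ‖((z • x).val).2‖ = ‖unop ((z • x).val).2‖ := (MulOpposite.norm_unop _).symm
      _ = ‖starRingEnd ℂ z • unop x.val.2‖ := by rw [adjC_smul_snd]
      _ ≤ ‖starRingEnd ℂ z‖ * ‖unop x.val.2‖ := ContinuousLinearMap.opNorm_smul_le _ _
      _ = ‖z‖ * ‖x.val.2‖ := by rw [MulOpposite.norm_unop]; simp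
    have h1 : ‖((z • x).val).1‖ ≤ ‖z‖ * ‖x.val.1‖ := by
      rw [adjC_smul_fst]; exact ContinuousLinearMap.opNorm_smul_le z _
    refine max_le ?_ ?_
    · exact h1.trans (mul_le_mul_of_nonneg_left (le_max_left _ _) (norm_nonneg z))
    · exact h2.trans (mul_le_mul_of_nonneg_left (le_max_right _ _) (norm_nonneg z))

instance : StarModule ℂ ↥(adjC A E) where
  star_smul z x := by
    refine adjC_ext ?_ ?_
    · show (τsm z x.val).2.unop = ((star z) • (star x)).val.1
      rw [adjC_smul_fst]
      show starRingEnd ℂ z • unop x.val.2 = star z • unop x.val.2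
      rfl
    · show unop (op ((τsm z x.val).1)) = unop ((star z • star x).val).2
      rw [adjC_smul_snd]
      show z • x.val.1 = starRingEnd ℂ (star z) • x.val.1
      simp

instance : CStarAlgebra ↥(adjC A E) where

end CModule

section PhiLemmas

variable {Φ : A → E →L[ℂ] E}

lemma phi_zero (hΦadd : ∀ a b : A, Φ (a + b) = Φ a + Φ b) : Φ 0 = 0 := by
  have h := hΦadd 0 0
  rw [add_zero] at h
  have h2 := congrArg (fun W => W - Φ 0) h
  simpa using h2.symm

lemma phi_sub (hΦadd : ∀ a b : A, Φ (a + b) = Φ a + Φ b)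
    (hΦsmul : ∀ (z : ℂ) (a : A), Φ (z • a) = z • Φ a) (a b : A) :
    Φ (a - b) = Φ a - Φ b := by
  have hneg : Φ (-b) = -Φ b := by
    have h1 : (-1 : ℂ) • b = -b := by simp
    have := hΦsmul (-1) b
    rw [h1] at this
    simpa using this
  rw [sub_eq_add_neg, hΦadd, hneg, sub_eq_add_neg]

lemma phi_star_ker (hΦadj : ∀ (a : A) (ξ η : E), (inner A (Φ a ξ) η : A) = inner A ξ (Φ (star a) η))
    {a : A} (ha : Φ a = 0) : Φ (star a) = 0 := by
  ext η
  refine eq_zero_of_inner (A := A) _ fun x => ?_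
  rw [← hΦadj a x η, ha]
  simp

lemma phi_adj (hΦadj : ∀ (a : A) (ξ η : E), (inner A (Φ a ξ) η : A) = inner A ξ (Φ (star a) η))
    (a : A) : IsAdj A (Φ a) (Φ (star a)) :=
  fun ξ η => hΦadj a ξ η

lemma phi_adj_symm (hΦadj : ∀ (a : A) (ξ η : E), (inner A (Φ a ξ) η : A) = inner A ξ (Φ (star a) η))
    (a : A) (x w : E) : (inner A x (Φ a w) : A) = inner A (Φ (star a) x) w := by
  have := hΦadj (star a) x w
  rw [star_star] at this
  exact this.symm

lemma phi_mod (hΦadj : ∀ (a : A) (ξ η : E), (inner A (Φ a ξ) η : A) = inner A ξ (Φ (star a) η))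
    (a : A) (ξ : E) (b : A) : Φ a (ξ <• b) = (Φ a ξ) <• b := by
  refine inner_ext (A := A) fun x => ?_
  rw [phi_adj_symm hΦadj, CStarModuleOld.inner_op_smul_right, CStarModuleOld.inner_op_smul_right,
    ← phi_adj_symm hΦadj]

lemma ker_right (hΦmul : ∀ a b : A, Φ (a * b) = Φ a * Φ b)
    (hΦadj : ∀ (a : A) (ξ η : E), (inner A (Φ a ξ) η : A) = inner A ξ (Φ (star a) η))
    {a b : A} (ha : ∀ c : A, Φ c = 0 → a * c = 0) (hb : Φ b = 0) : b * a = 0 := by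
  set x := b * a with hx
  have hxker : Φ x = 0 := by rw [hx, hΦmul, hb]; simp
  have hsb : Φ (star b) = 0 := phi_star_ker hΦadj hb
  have hsx : Φ (star x) = 0 := by
    rw [hx, star_mul, hΦmul, hsb]
    simp
  have hxsx : x * star x = 0 := by
    rw [hx, mul_assoc, ha (star x) hsx, mul_zero]
  have hnorm : ‖x‖ * ‖x‖ = 0 := by
    rw [← CStarRing.norm_self_mul_star, hxsx, norm_zero]
  have : ‖x‖ = 0 := by nlinarith [norm_nonneg x]
  exact norm_eq_zero.mp this

lemma ker_inj {a : A}
    (hΦadj : ∀ (a : A) (ξ η : E), (inner A (Φ a ξ) η : A) = inner A ξ (Φ (star a) η))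
    (ha : ∀ c : A, Φ c = 0 → a * c = 0) (h0 : Φ a = 0) : a = 0 := by
  have hsa : Φ (star a) = 0 := phi_star_ker hΦadj h0
  have h1 : a * star a = 0 := ha (star a) hsa
  have hnorm : ‖a‖ * ‖a‖ = 0 := by
    rw [← CStarRing.norm_self_mul_star, h1, norm_zero]
  have : ‖a‖ = 0 := by nlinarith [norm_nonneg a]
  exact norm_eq_zero.mp this

lemma ker_inj_on (hΦadd : ∀ a b : A, Φ (a + b) = Φ a + Φ b)
    (hΦsmul : ∀ (z : ℂ) (a : A), Φ (z • a) = z • Φ a)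
    (hΦadj : ∀ (a : A) (ξ η : E), (inner A (Φ a ξ) η : A) = inner A ξ (Φ (star a) η))
    {a b : A} (ha : ∀ c : A, Φ c = 0 → a * c = 0) (hb : ∀ c : A, Φ c = 0 → b * c = 0)
    (hab : Φ a = Φ b) : a = b := by
  have hd : ∀ c : A, Φ c = 0 → (a - b) * c = 0 := fun c hc => by
    rw [sub_mul, ha c hc, hb c hc, sub_zero]
  have h0 : Φ (a - b) = 0 := by rw [phi_sub hΦadd hΦsmul, hab, sub_self]
  exact sub_eq_zero.mp (ker_inj hΦadj hd h0)

end PhiLemmas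

lemma extO_zero : extO (0 : E →L[ℂ] E) = 0 := by
  refine opExt fun ξ => ?_
  rw [extO_coe]
  show ((0 : E →L[ℂ] E) ξ : Completion E) = (0 : Completion E →L[ℂ] Completion E) (ξ : Completion E)
  rw [ContinuousLinearMap.zero_apply, ContinuousLinearMap.zero_apply]
  exact UniformSpace.Completion.coe_zero

section MainSurj

set_option maxHeartbeats 1000000
set_option synthInstance.maxHeartbeats 400000

variable {Φ : A → E →L[ℂ] E}

lemma surj_of_bimod
    (hΦadd : ∀ a b : A, Φ (a + b) = Φ a + Φ b)
    (hΦsmul : ∀ (z : ℂ) (a : A), Φ (z • a) = z • Φ a)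
    (hΦmul : ∀ a b : A, Φ (a * b) = Φ a * Φ b)
    (hΦadj : ∀ (a : A) (ξ η : E), (inner A (Φ a ξ) η : A) = inner A ξ (Φ (star a) η))
    (L : E → E → A)
    (hL1 : ∀ (a : A) (ξ η : E), L (Φ a ξ) η = a * L ξ η)
    (hL2 : ∀ ξ η : E, star (L ξ η) = L η ξ)
    (hL5 : ∀ ξ η ζ : E, Φ (L ξ η) ζ = ξ <• (inner A η ζ : A)) :
    ∀ T ∈ closure (Submodule.span ℂ
      {T : E →L[ℂ] E | ∃ ξ η : E, ∀ ζ : E, T ζ = ξ <• (inner A η ζ : A)} :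
        Set (E →L[ℂ] E)),
      ∃ a : A, (∀ b : A, Φ b = 0 → a * b = 0) ∧ Φ a = T := by
  have hL0 : ∀ η : E, L (0 : E) η = 0 := fun η => by
    have h := hL1 0 0 η
    rw [phi_zero hΦadd] at h
    simpa using h
  have hLann : ∀ (ξ η b : A → A) , True := fun _ _ _ => trivial -- dummy to be removed
  clear hLann
  have hLann : ∀ (ξ η : E) (b : A), Φ b = 0 → L ξ η * b = 0 := by
    intro ξ η b hb
    have h1 : star (L ξ η * b) = 0 := by
      rw [star_mul, hL2 ξ η, ← hL1 (star b) η ξ, phi_star_ker hΦadj hb,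
        ContinuousLinearMap.zero_apply]
      exact hL0 ξ
    have h2 := congrArg star h1
    rwa [star_star, star_zero] at h2
  set LSet : Set A := {a | ∃ ξ η : E, a = L ξ η} with hLSetdef
  have hmulclosed : ∀ x y : A, x ∈ Submodule.span ℂ LSet → y ∈ Submodule.span ℂ LSet →
      x * y ∈ Submodule.span ℂ LSet := by
    intro x y hx hy
    induction hx using Submodule.span_induction with
    | mem u hu =>
        induction hy using Submodule.span_induction with
        | mem v hv =>
            obtain ⟨ξ, η, rfl⟩ := hu
            obtain ⟨ξ', η', rfl⟩ := hv
            exact Submodule.subset_span ⟨Φ (L ξ η) ξ', η', (hL1 (L ξ η) ξ' η').symm⟩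
        | zero => rw [mul_zero]; exact Submodule.zero_mem _
        | add v w _ _ hv hw => rw [mul_add]; exact Submodule.add_mem _ hv hw
        | smul z v _ hv => rw [mul_smul_comm]; exact Submodule.smul_mem _ _ hv
    | zero => rw [zero_mul]; exact Submodule.zero_mem _
    | add u w _ _ hu hw => rw [add_mul]; exact Submodule.add_mem _ hu hw
    | smul z u _ hu => rw [smul_mul_assoc]; exact Submodule.smul_mem _ _ hu
  have hstar0 : ∀ x, x ∈ Submodule.span ℂ LSet → star x ∈ Submodule.span ℂ LSet := by
    intro x hx
    induction hx using Submodule.span_induction with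
    | mem y hy =>
        obtain ⟨ξ, η, rfl⟩ := hy
        rw [hL2 ξ η]
        exact Submodule.subset_span ⟨η, ξ, rfl⟩
    | zero => simp only [star_zero]; exact Submodule.zero_mem _
    | add y z _ _ hy hz => rw [star_add]; exact Submodule.add_mem _ hy hz
    | smul z y _ hy => rw [star_smul]; exact Submodule.smul_mem _ _ hy
  set Dsub : NonUnitalStarSubalgebra ℂ A :=
    ((Submodule.span ℂ LSet).toNonUnitalSubalgebra hmulclosed).toNonUnitalStarSubalgebra
      hstar0 with hDsubdef
  set Cl := Dsub.topologicalClosure with hCldef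
  haveI hClosed : IsClosed (Cl : Set A) := Dsub.isClosed_topologicalClosure
  letI instCl : NonUnitalCStarAlgebra ↥Cl :=
    @NonUnitalStarSubalgebra.nonUnitalCStarAlgebra _ _ _ _ _ _ _ Cl hClosed
  have hClcoe : (Cl : Set A) = closure (Submodule.span ℂ LSet : Set A) := rfl
  have hClann : ∀ x ∈ (Cl : Set A), ∀ b : A, Φ b = 0 → x * b = 0 := by
    intro x hx b hb
    have hsub : (Submodule.span ℂ LSet : Set A) ⊆ {y : A | y * b = 0} := by
      intro y hy
      have hle : Submodule.span ℂ LSet ≤ LinearMap.ker (LinearMap.mulRight ℂ b) := by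
        refine Submodule.span_le.mpr ?_
        rintro u ⟨ξ, η, rfl⟩
        simpa [LinearMap.mem_ker] using hLann ξ η b hb
      simpa using hle hy
    have hcl : IsClosed {y : A | y * b = 0} := by
      have : {y : A | y * b = 0} = (fun y : A => y * b) ⁻¹' {0} := rfl
      rw [this]
      exact IsClosed.preimage (continuous_id.mul continuous_const) isClosed_singleton
    rw [hClcoe] at hx
    exact closure_minimal hsub hcl hx
  -- the star algebra hom into the adjointable operators
  let Φb : ↥Cl →⋆ₙₐ[ℂ] ↥(adjC A E) :=
    { toFun := fun a => ⟨(extO (Φ a.val), op (extO (Φ (star a.val)))),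
        mem_adjC_of_pair (phi_adj hΦadj a.val)⟩
      map_add' := fun x y => adjC_ext
        (by show extO (Φ (x.val + y.val)) = extO (Φ x.val) + extO (Φ y.val)
            rw [hΦadd, extO_add])
        (by show extO (Φ (star (x.val + y.val))) = extO (Φ (star x.val)) + extO (Φ (star y.val))
            rw [star_add, hΦadd, extO_add])
      map_mul' := fun x y => adjC_ext
        (by show extO (Φ (x.val * y.val)) = extO (Φ x.val) * extO (Φ y.val)
            rw [hΦmul, extO_mul])
        (by show extO (Φ (star (x.val * y.val)))
              = extO (Φ (star y.val)) * extO (Φ (star x.val))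
            rw [star_mul, hΦmul, extO_mul])
      map_smul' := fun z x => adjC_ext
        (by show extO (Φ (z • x.val)) = z • extO (Φ x.val)
            rw [hΦsmul, extO_smul])
        (by show extO (Φ (star (z • x.val))) = starRingEnd ℂ z • extO (Φ (star x.val))
            rw [star_smul, Complex.star_def, hΦsmul, extO_smul])
      map_zero' := adjC_ext
        (by show extO (Φ (0 : A)) = 0
            rw [phi_zero hΦadd, extO_zero])
        (by show extO (Φ (star (0 : A))) = 0
            rw [star_zero, phi_zero hΦadd, extO_zero])
      map_star' := fun x => adjC_ext
        (by show extO (Φ (star x.val)) = extO (Φ (star x.val))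
            rfl)
        (by show extO (Φ (star (star x.val))) = extO (Φ x.val)
            rw [star_star]) }
  have hinj : Function.Injective Φb := by
    intro x y hxy
    apply Subtype.ext
    refine ker_inj_on hΦadd hΦsmul hΦadj (hClann _ x.property) (hClann _ y.property) ?_
    have h1 : extO (Φ x.val) = extO (Φ y.val) := congrArg (fun w => w.val.1) hxy
    exact extO_inj h1
  have hnorm : ∀ x : ↥Cl, ‖Φ x.val‖ = ‖x‖ := by
    intro x
    rw [← NonUnitalStarAlgHom.norm_map Φb hinj x]
    show ‖Φ x.val‖
      = ‖((extO (Φ x.val), op (extO (Φ (star x.val)))) : DD E)‖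
    exact (adjC_norm_pair (phi_adj hΦadj x.val)).symm
  let S : ↥Cl → (E →L[ℂ] E) := fun a => Φ a.val
  have hiso : Isometry S := by
    refine Isometry.of_dist_eq fun x y => ?_
    rw [dist_eq_norm, dist_eq_norm]
    show ‖Φ x.val - Φ y.val‖ = ‖x - y‖
    rw [← phi_sub hΦadd hΦsmul]
    exact hnorm (x - y)
  have hrangeclosed : IsClosed (Set.range S) := hiso.isClosedEmbedding.isClosed_range
  have hrank : {T : E →L[ℂ] E | ∃ ξ η : E, ∀ ζ : E, T ζ = ξ <• (inner A η ζ : A)}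
      ⊆ Set.range S := by
    rintro T ⟨ξ, η, hT⟩
    have hmem : L ξ η ∈ Cl :=
      Dsub.le_topologicalClosure (Submodule.subset_span ⟨ξ, η, rfl⟩)
    refine ⟨⟨L ξ η, hmem⟩, ?_⟩
    ext ζ
    rw [hT ζ]
    exact hL5 ξ η ζ
  let Msub : Submodule ℂ (E →L[ℂ] E) :=
    { carrier := Set.range S
      add_mem' := by
        rintro x y ⟨u, rfl⟩ ⟨v, rfl⟩
        exact ⟨u + v, by show Φ (u.val + v.val) = _; rw [hΦadd]⟩
      zero_mem' := ⟨0, by show Φ (0 : A) = 0; rw [phi_zero hΦadd]⟩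
      smul_mem' := by
        rintro z x ⟨u, rfl⟩
        exact ⟨z • u, by show Φ (z • u.val) = _; rw [hΦsmul]⟩ }
  intro T hT
  have hspan : (Submodule.span ℂ
      {T : E →L[ℂ] E | ∃ ξ η : E, ∀ ζ : E, T ζ = ξ <• (inner A η ζ : A)} :
        Set (E →L[ℂ] E)) ⊆ Set.range S :=
    Submodule.span_le (p := Msub).mpr hrank
  have hTr : T ∈ Set.range S := closure_minimal hspan hrangeclosed hT
  obtain ⟨a, ha⟩ := hTr
  exact ⟨a.val, hClann _ a.property, ha⟩

end MainSurj

section Construct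

set_option maxHeartbeats 1000000

variable {Φ : A → E →L[ℂ] E}

lemma phi_neg (hΦadd : ∀ a b : A, Φ (a + b) = Φ a + Φ b)
    (hΦsmul : ∀ (z : ℂ) (a : A), Φ (z • a) = z • Φ a) (a : A) : Φ (-a) = -Φ a := by
  have := phi_sub hΦadd hΦsmul 0 a
  rw [zero_sub, phi_zero hΦadd, zero_sub] at this
  exact this

lemma bimod_of_inj_surj
    (hΦadd : ∀ a b : A, Φ (a + b) = Φ a + Φ b)
    (hΦsmul : ∀ (z : ℂ) (a : A), Φ (z • a) = z • Φ a)
    (hΦmul : ∀ a b : A, Φ (a * b) = Φ a * Φ b)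
    (hΦadj : ∀ (a : A) (ξ η : E), (inner A (Φ a ξ) η : A) = inner A ξ (Φ (star a) η))
    (KEs : Set (E →L[ℂ] E))
    (hKE : KEs = closure (Submodule.span ℂ
      {T : E →L[ℂ] E | ∃ ξ η : E, ∀ ζ : E, T ζ = ξ <• (inner A η ζ : A)} :
        Set (E →L[ℂ] E)))
    (JEs : Set A)
    (hJE : JEs = {a : A | (∀ b : A, Φ b = 0 → a * b = 0) ∧ Φ a ∈ KEs})
    (hinj : Set.InjOn Φ JEs) (hsurj : Φ '' JEs = KEs) :
    ∃ L : E → E → A,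
      (∀ (a : A) (ξ η : E), L (Φ a ξ) η = a * L ξ η) ∧
      (∀ ξ η : E, star (L ξ η) = L η ξ) ∧
      (∀ ξ : E, 0 ≤ L ξ ξ) ∧
      (∀ ξ : E, L ξ ξ = 0 → ξ = 0) ∧
      (∀ ξ η ζ : E, Φ (L ξ η) ζ = ξ <• (inner A η ζ : A)) := by
  have hrk : ∀ ξ η : E, rankOne (A := A) ξ η ∈ KEs := fun ξ η => by
    rw [hKE]
    exact subset_closure (Submodule.subset_span ⟨ξ, η, fun ζ => rfl⟩)
  have hex : ∀ ξ η : E, ∃ a : A, a ∈ JEs ∧ Φ a = rankOne (A := A) ξ η := by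
    intro ξ η
    have h1 : rankOne (A := A) ξ η ∈ Φ '' JEs := hsurj.symm ▸ hrk ξ η
    obtain ⟨a, ha, hΦa⟩ := h1
    exact ⟨a, ha, hΦa⟩
  choose L hLJ hLΦ using hex
  have hLann : ∀ ξ η : E, ∀ b : A, Φ b = 0 → L ξ η * b = 0 := fun ξ η => by
    have := hLJ ξ η
    rw [hJE] at this
    exact this.1
  have hLK : ∀ ξ η : E, Φ (L ξ η) ∈ KEs := fun ξ η => (hLΦ ξ η) ▸ hrk ξ η
  -- property (1)
  have prop1 : ∀ (a : A) (ξ η : E), L (Φ a ξ) η = a * L ξ η := by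
    intro a ξ η
    have hΦprod : Φ (a * L ξ η) = rankOne (A := A) (Φ a ξ) η := by
      rw [hΦmul, hLΦ]
      ext ζ
      show Φ a (rankOne (A := A) ξ η ζ) = rankOne (A := A) (Φ a ξ) η ζ
      rw [rankOne_apply, rankOne_apply]
      exact phi_mod hΦadj a ξ _
    have hmem2 : a * L ξ η ∈ JEs := by
      rw [hJE]
      refine ⟨fun b hb => ?_, ?_⟩
      · rw [mul_assoc, hLann ξ η b hb, mul_zero]
      · rw [hΦprod]; exact hrk _ _
    refine hinj (hLJ (Φ a ξ) η) hmem2 ?_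
    rw [hLΦ, hΦprod]
  -- property (2)
  have prop2 : ∀ ξ η : E, star (L ξ η) = L η ξ := by
    intro ξ η
    have hΦstar : Φ (star (L ξ η)) = rankOne (A := A) η ξ := by
      ext ζ
      refine inner_ext (A := A) fun x => ?_
      rw [← hΦadj (L ξ η) x ζ, hLΦ, rankOne_apply, rankOne_apply,
        CStarModuleOld.inner_op_smul_left, CStarModuleOld.inner_op_smul_right,
        ← CStarModuleOld.star_inner η x]
    have hmem : star (L ξ η) ∈ JEs := by
      rw [hJE]
      refine ⟨fun b hb => ?_, ?_⟩
      · have h1 : star b * L ξ η = 0 :=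
          ker_right hΦmul hΦadj (hLann ξ η) (phi_star_ker hΦadj hb)
        have h2 := congrArg star h1
        rwa [star_mul, star_star, star_zero] at h2
      · rw [hΦstar]; exact hrk _ _
    refine hinj hmem (hLJ η ξ) ?_
    rw [hΦstar, hLΦ]
  -- property (4)
  have prop4 : ∀ ξ : E, L ξ ξ = 0 → ξ = 0 := by
    intro ξ h0
    have h1 : rankOne (A := A) ξ ξ = 0 := by rw [← hLΦ ξ ξ, h0, phi_zero hΦadd]
    have h2 : ξ <• (inner A ξ ξ : A) = 0 := by
      have := congrArg (fun W : E →L[ℂ] E => W ξ) h1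
      simpa using this
    have h3 : (inner A ξ ξ : A) * (inner A ξ ξ : A) = 0 := by
      have := congrArg (fun w => (inner A ξ w : A)) h2
      simpa [CStarModuleOld.inner_op_smul_right] using this
    have h4 : ‖(inner A ξ ξ : A)‖ * ‖(inner A ξ ξ : A)‖ = 0 := by
      rw [← CStarRing.norm_star_mul_self, CStarModuleOld.star_inner, h3, norm_zero]
    have h5 : (inner A ξ ξ : A) = 0 := by
      have := norm_nonneg (inner A ξ ξ : A)
      have h6 : ‖(inner A ξ ξ : A)‖ = 0 := by nlinarith
      exact norm_eq_zero.mp h6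
    exact CStarModuleOld.inner_self.mp h5
  -- property (3)
  have prop3 : ∀ ξ : E, 0 ≤ L ξ ξ := by
    intro ξ
    set a := L ξ ξ with ha_def
    have ha_star : star a = a := prop2 ξ ξ
    have ha_sa : IsSelfAdjoint a := ha_star
    have ha_ann : ∀ b : A, Φ b = 0 → a * b = 0 := hLann ξ ξ
    set n := a⁻ with hn_def
    have hn_nonneg : (0 : A) ≤ n := CFC.negPart_nonneg a
    have hn_star : star n = n := (IsSelfAdjoint.of_nonneg hn_nonneg).star_eq
    have han : a * n = -(n * n) := by
      conv_lhs => rw [← CFC.posPart_sub_negPart a ha_sa]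
      rw [sub_mul, CFC.posPart_mul_negPart, zero_sub, ← hn_def]
    -- first inequality : inner A ζ (Φ (n * (a * n)) ζ) ≥ 0
    have key1 : ∀ ζ : E, (0 : A) ≤ inner A ζ (Φ (n * (a * n)) ζ) := by
      intro ζ
      have h1 : Φ (n * (a * n)) ζ = Φ n (Φ a (Φ n ζ)) := by
        rw [hΦmul, hΦmul]; rfl
      rw [h1]
      have h2 : (inner A ζ (Φ n (Φ a (Φ n ζ))) : A) = inner A (Φ n ζ) (Φ a (Φ n ζ)) := by
        rw [phi_adj_symm hΦadj n ζ _, hn_star]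
      rw [h2]
      set w := Φ n ζ with hw
      have h3 : Φ a w = ξ <• (inner A ξ w : A) := by rw [hLΦ]; rfl
      rw [h3, CStarModuleOld.inner_op_smul_right, ← CStarModuleOld.star_inner ξ w]
      exact star_mul_self_nonneg _
    -- so  inner A ζ (Φ (n * (n * n)) ζ) ≤ 0
    have key2 : ∀ ζ : E, (inner A ζ (Φ (n * (n * n)) ζ) : A) ≤ 0 := by
      intro ζ
      have h1 : n * (n * n) = -(n * (a * n)) := by
        rw [han]
        simp [mul_neg]
      rw [h1, phi_neg hΦadd hΦsmul]
      have := key1 ζ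
      simp only [ContinuousLinearMap.neg_apply, CStarModuleOld.inner_neg_right]
      exact neg_nonpos.mpr this
    -- sqrt trick : inner A ζ (Φ (n * (n * n)) ζ) ≥ 0 as well
    set s := CFC.sqrt n with hs_def
    have hs_nonneg : (0 : A) ≤ s := CFC.sqrt_nonneg (a := n)
    have hss : s * s = n := CFC.sqrt_mul_sqrt_self n hn_nonneg
    have hs_star : star s = s := (IsSelfAdjoint.of_nonneg hs_nonneg).star_eq
    set m := n * s with hm_def
    have hm_star : star m = m := by
      rw [hm_def, star_mul, hs_star, hn_star, ← hss, mul_assoc]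
    have hmm : m * m = n * (n * n) := by
      rw [hm_def, ← hss]
      noncomm_ring
    have key3 : ∀ ζ : E, (0 : A) ≤ inner A ζ (Φ (n * (n * n)) ζ) := by
      intro ζ
      rw [← hmm, hΦmul]
      have h1 : (Φ m * Φ m) ζ = Φ m (Φ m ζ) := rfl
      rw [h1, phi_adj_symm hΦadj m ζ _, hm_star]
      exact CStarModuleOld.inner_self_nonneg
    have key4 : ∀ ζ : E, (inner A ζ (Φ (n * (n * n)) ζ) : A) = 0 := fun ζ =>
      le_antisymm (key2 ζ) (key3 ζ)
    -- Φ m = 0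
    have hΦm : Φ m = 0 := by
      ext ζ
      have h1 : (inner A (Φ m ζ) (Φ m ζ) : A) = 0 := by
        have := key4 ζ
        rw [← hmm, hΦmul] at this
        have h2 : (Φ m * Φ m) ζ = Φ m (Φ m ζ) := rfl
        rw [h2, phi_adj_symm hΦadj m ζ _, hm_star] at this
        exact this
      simpa using CStarModuleOld.inner_self.mp h1
    have hΦn3 : Φ (n * (n * n)) = 0 := by
      rw [← hmm, hΦmul, hΦm, zero_mul]
    -- n * (n * n) annihilates the kernel
    have hann3 : ∀ b : A, Φ b = 0 → (n * (n * n)) * b = 0 := by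
      intro b hb
      have h1 : n * (n * n) = -(n * (a * n)) := by
        rw [han]; simp [mul_neg]
      have h2 : Φ (n * b) = 0 := by rw [hΦmul, hb, mul_zero]
      rw [h1, neg_mul]
      have h3 : (n * (a * n)) * b = n * (a * (n * b)) := by noncomm_ring
      rw [h3, ha_ann (n * b) h2, mul_zero, neg_zero]
    have hn3 : n * (n * n) = 0 := ker_inj hΦadj hann3 hΦn3
    -- deduce n = 0
    have hmm0 : m * m = 0 := by rw [hmm, hn3]
    have hm0 : m = 0 := by
      have h1 : ‖m‖ * ‖m‖ = 0 := by
        rw [← CStarRing.norm_star_mul_self, hm_star, hmm0, norm_zero]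
      have h2 : ‖m‖ = 0 := by nlinarith [norm_nonneg m]
      exact norm_eq_zero.mp h2
    have hnn0 : n * n = 0 := by
      have : n * n = m * s := by rw [hm_def, ← hss]; noncomm_ring
      rw [this, hm0, zero_mul]
    have hn0 : n = 0 := by
      have h1 : ‖n‖ * ‖n‖ = 0 := by
        rw [← CStarRing.norm_star_mul_self, hn_star, hnn0, norm_zero]
      have h2 : ‖n‖ = 0 := by nlinarith [norm_nonneg n]
      exact norm_eq_zero.mp h2
    rw [← CFC.posPart_sub_negPart a ha_sa, ← hn_def, hn0, sub_zero]
    exact CFC.posPart_nonneg a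
  exact ⟨L, prop1, prop2, prop3, prop4, fun ξ η ζ => by rw [hLΦ]; rfl⟩

end Construct

end CorrAux


open CorrAux in
/-- Let `E` be a C*-correspondence over `A` with left action `Φ`.  Then `E` admits a
Hilbert `A`-bimodule structure if and only if `K(E) ⊆ Φ(A)` and
`Φ⁻¹(K(E)) = ker Φ ⊕ J_E` where `J_E = (ker Φ)^⊥ ∩ Φ⁻¹(K(E))`; equivalently, if and only
if the restriction of `Φ` to `J_E` is a *-isomorphism onto `K(E)`. -/
theorem corr_bimodule_iff_decomposition {A E : Type*}
    [NonUnitalCStarAlgebra A] [PartialOrder A] [StarOrderedRing A]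
    [NormedAddCommGroup E] [NormedSpace ℂ E] [SMul Aᵐᵒᵖ E] [CStarModuleOld A E]
    (Φ : A → E →L[ℂ] E)  -- the left action
    (hΦadd : ∀ a b : A, Φ (a + b) = Φ a + Φ b)
    (hΦsmul : ∀ (z : ℂ) (a : A), Φ (z • a) = z • Φ a)
    (hΦmul : ∀ a b : A, Φ (a * b) = Φ a * Φ b)
    (hΦadj : ∀ (a : A) (ξ η : E), (inner A (Φ a ξ) η : A) = inner A ξ (Φ (star a) η)) :
    -- `K(E)` is the closed linear span of the rank-one operators:
    ∀ KE : Set (E →L[ℂ] E),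
      KE = closure (Submodule.span ℂ
        {T : E →L[ℂ] E | ∃ ξ η : E, ∀ ζ : E, T ζ = ξ <• (inner A η ζ : A)} :
          Set (E →L[ℂ] E)) →
    -- `J_E = (ker Φ)^⊥ ∩ Φ⁻¹(K(E))`:
    ∀ JE : Set A,
      JE = {a : A | (∀ b : A, Φ b = 0 → a * b = 0) ∧ Φ a ∈ KE} →
    -- the Hilbert bimodule structure predicate:
    ∀ Bimod : Prop,
      (Bimod ↔ ∃ L : E → E → A,
        (∀ (a : A) (ξ η : E), L (Φ a ξ) η = a * L ξ η) ∧
        (∀ ξ η : E, star (L ξ η) = L η ξ) ∧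
        (∀ ξ : E, 0 ≤ L ξ ξ) ∧
        (∀ ξ : E, L ξ ξ = 0 → ξ = 0) ∧
        (∀ ξ η ζ : E, Φ (L ξ η) ζ = ξ <• (inner A η ζ : A))) →
    -- the two characterizations:
    (Bimod ↔ (KE ⊆ Set.range Φ ∧
      ∀ a : A, Φ a ∈ KE ↔ ∃ b c : A, Φ b = 0 ∧ c ∈ JE ∧ a = b + c)) ∧
    (Bimod ↔ (Set.InjOn Φ JE ∧ Φ '' JE = KE)) := by
  intro KE hKE JE hJE Bimod hBimod
  subst hKE
  subst hJE
  set KEs : Set (E →L[ℂ] E) := closure (Submodule.span ℂ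
      {T : E →L[ℂ] E | ∃ ξ η : E, ∀ ζ : E, T ζ = ξ <• (inner A η ζ : A)} :
        Set (E →L[ℂ] E)) with hKEs
  set JEs : Set A := {a : A | (∀ b : A, Φ b = 0 → a * b = 0) ∧ Φ a ∈ KEs} with hJEs
  -- injectivity on `J_E` holds unconditionally
  have hInj : Set.InjOn Φ JEs := by
    intro a ha b hb hab
    exact ker_inj_on hΦadd hΦsmul hΦadj ha.1 hb.1 hab
  -- Bimod implies the iso characterization
  have claimA : Bimod → (Set.InjOn Φ JEs ∧ Φ '' JEs = KEs) := by
    intro hbm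
    rw [hBimod] at hbm
    obtain ⟨L, hL1, hL2, _, _, hL5⟩ := hbm
    refine ⟨hInj, Set.Subset.antisymm ?_ ?_⟩
    · rintro T ⟨a, ha, rfl⟩
      exact ha.2
    · intro T hT
      rw [hKEs] at hT
      obtain ⟨a, hann, hΦa⟩ := surj_of_bimod hΦadd hΦsmul hΦmul hΦadj L hL1 hL2 hL5 T hT
      refine ⟨a, ⟨hann, ?_⟩, hΦa⟩
      rw [hKEs, hΦa]
      exact hT
  -- the iso characterization implies Bimod
  have claimB : (Set.InjOn Φ JEs ∧ Φ '' JEs = KEs) → Bimod := by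
    rintro ⟨hinj, hsurj⟩
    rw [hBimod]
    exact bimod_of_inj_surj hΦadd hΦsmul hΦmul hΦadj KEs hKEs JEs hJEs hinj hsurj
  refine ⟨?_, Iff.intro claimA claimB⟩
  constructor
  · intro hbm
    obtain ⟨hinj, hsurj⟩ := claimA hbm
    constructor
    · intro T hT
      rw [← hsurj] at hT
      obtain ⟨a, _, rfl⟩ := hT
      exact ⟨a, rfl⟩
    · intro a
      constructor
      · intro ha
        rw [← hsurj] at ha
        obtain ⟨c, hc, hΦc⟩ := ha
        refine ⟨a - c, c, ?_, hc, by abel⟩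
        rw [phi_sub hΦadd hΦsmul, hΦc, sub_self]
      · rintro ⟨b, c, hb, hc, rfl⟩
        rw [hΦadd, hb, zero_add]
        exact hc.2
  · rintro ⟨hrange, hdecomp⟩
    refine claimB ⟨hInj, Set.Subset.antisymm ?_ ?_⟩
    · rintro T ⟨a, ha, rfl⟩
      exact ha.2
    · intro T hT
      obtain ⟨a, rfl⟩ := hrange hT
      obtain ⟨b, c, hb, hc, hbc⟩ := (hdecomp a).mp hT
      refine ⟨c, hc, ?_⟩
      rw [hbc, hΦadd, hb, zero_add]
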